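/- Let p : ℝ → ℝ be convex, differentiable, nondecreasing on [0, ∞), and suppose there is C > 0 with p(r) ≤ C·(1 + r^{4/3}) for all r ≥ 0. Define I : [0, ∞) → ℝ ∪ {+∞} by I(x) = sup_{r ≥ 0} {2·r·x − p(r)} + p(0), the supremum taken in the extended reals. Then sup_{x ≥ 0} {x² − I(x)} + p(0) = sup_{r ≥ 0} {−r² + p(r)}, and the right-hand supremum is finite and attained at some r₀ ≥ 0. (This is the reduction, carried out at the end of Section 2 of the paper, of the variational formula of Theorem 4 for the pressure of the long-range-hopping Bose–Hubbard model to the closed formula p(β, μ, λ) = sup_{r ≥ 0} {−r² + p(r)} of equation (1.3).) -/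

import Mathlib

open Set

private lemma subgrad (p : ℝ → ℝ) (hconv : ConvexOn ℝ Set.univ p)
    (hdiff : Differentiable ℝ p) (x y : ℝ) :
    p x + deriv p x * (y - x) ≤ p y := by
  rcases lt_trichotomy x y with h | h | h
  · have := hconv.deriv_le_slope (mem_univ x) (mem_univ y) h (hdiff x)
    rw [slope_def_field] at this
    have hy : 0 < y - x := by linarith
    have := (le_div_iff₀ hy).mp this
    linarith
  · simp [h]
  · have := hconv.slope_le_deriv (mem_univ y) (mem_univ x) h (hdiff x)
    rw [slope_def_field] at this
    have hy : 0 < x - y := by linarith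
    have := (div_le_iff₀ hy).mp this
    linarith

private lemma exists_max (p : ℝ → ℝ) (hconv : ConvexOn ℝ Set.univ p)
    (hdiff : Differentiable ℝ p) (hmono : MonotoneOn p (Set.Ici (0 : ℝ)))
    (C : ℝ) (hC : 0 < C) (hgrowth : ∀ r : ℝ, 0 ≤ r → p r ≤ C * (1 + r ^ ((4 : ℝ) / 3))) :
    ∃ r₀ : ℝ, 0 ≤ r₀ ∧ (∀ r : ℝ, 0 ≤ r → -r ^ 2 + p r ≤ -r₀ ^ 2 + p r₀) ∧
      (∀ r : ℝ, 0 ≤ r → 2 * r * r₀ - p r ≤ 2 * r₀ * r₀ - p r₀) := by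
  set F : ℝ → ℝ := fun r => -r ^ 2 + p r with hF
  set R : ℝ := max 1 (max ((2 * C) ^ ((3 : ℝ) / 2)) (Real.sqrt (2 * (C - p 0)) + 1)) with hR
  have hR1 : (1 : ℝ) ≤ R := le_max_left _ _
  have hdecay : ∀ r : ℝ, R < r → F r < F 0 := by
    intro r hr
    have hr1 : (1 : ℝ) < r := lt_of_le_of_lt hR1 hr
    have hr0 : (0 : ℝ) < r := by linarith
    have h23 : (2 * C) ≤ r ^ ((2 : ℝ) / 3) := by
      have h1 : (2 * C) ^ ((3 : ℝ) / 2) ≤ r :=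
        le_of_lt (lt_of_le_of_lt (le_trans (le_max_left _ _) (le_max_right _ _)) hr)
      calc 2 * C = (2 * C) ^ (1 : ℝ) := (Real.rpow_one _).symm
        _ = ((2 * C) ^ ((3 : ℝ) / 2)) ^ ((2 : ℝ) / 3) := by
            rw [← Real.rpow_mul (by positivity)]; norm_num
        _ ≤ r ^ ((2 : ℝ) / 3) := Real.rpow_le_rpow (by positivity) h1 (by norm_num)
    have hsplit : r ^ ((4 : ℝ) / 3) * r ^ ((2 : ℝ) / 3) = r ^ 2 := by
      rw [← Real.rpow_add hr0, ← Real.rpow_natCast r 2]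
      norm_num
    have h43 : 2 * C * r ^ ((4 : ℝ) / 3) ≤ r ^ 2 := by
      calc 2 * C * r ^ ((4 : ℝ) / 3) ≤ r ^ ((2 : ℝ) / 3) * r ^ ((4 : ℝ) / 3) :=
            mul_le_mul_of_nonneg_right h23 (by positivity)
        _ = r ^ 2 := by rw [mul_comm]; exact hsplit
    have hsq : 2 * (C - p 0) < r ^ 2 := by
      have : Real.sqrt (2 * (C - p 0)) < r :=
        lt_of_le_of_lt (by linarith [le_trans (le_max_right _ _) (le_max_right 1 (max ((2 * C) ^ ((3 : ℝ) / 2)) (Real.sqrt (2 * (C - p 0)) + 1)))]) hr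
      exact (Real.sqrt_lt' hr0).mp this
    have hp := hgrowth r hr0.le
    have hF0 : F 0 = p 0 := by simp [hF]
    have hFr : F r = -r ^ 2 + p r := rfl
    rw [hF0, hFr]
    linarith [hp, h43, hsq]
  have hcont : Continuous F := (continuous_pow 2).neg.add hdiff.continuous
  obtain ⟨r₀, hr₀mem, hr₀max⟩ :=
    (isCompact_Icc (a := (0:ℝ)) (b := R)).exists_isMaxOn ⟨0, by constructor <;> linarith⟩
      hcont.continuousOn
  have hmax : ∀ r : ℝ, 0 ≤ r → F r ≤ F r₀ := by
    intro r hr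
    rcases le_or_gt r R with h | h
    · exact hr₀max ⟨hr, h⟩
    · exact le_trans (hdecay r h).le (hr₀max ⟨le_refl 0, by linarith⟩)
  refine ⟨r₀, hr₀mem.1, hmax, ?_⟩
  have hslope : ∀ r : ℝ, 0 ≤ r → p r₀ + 2 * r₀ * (r - r₀) ≤ p r := by
    rcases eq_or_lt_of_le hr₀mem.1 with h0 | h0
    · intro r hr
      have := hmono (mem_Ici.mpr le_rfl) (mem_Ici.mpr hr) hr
      rw [← h0]; simpa using this
    · have hloc : IsLocalMax F r₀ := by
        have : Ici (0:ℝ) ∈ nhds r₀ := Ici_mem_nhds h0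
        filter_upwards [this] with y hy using hmax y hy
      have hFd : HasDerivAt F (-(2 * r₀) + deriv p r₀) r₀ := by
        have h1 : HasDerivAt (fun x : ℝ => -x ^ 2) (-(2 * r₀)) r₀ := by
          exact (hasDerivAt_pow 2 r₀).neg.congr_deriv (by norm_num)
        exact h1.add (hdiff r₀).hasDerivAt
      have hderiv : deriv p r₀ = 2 * r₀ := by
        have h0' := hloc.deriv_eq_zero
        rw [hFd.deriv] at h0'
        linarith
      intro r hr
      have := subgrad p hconv hdiff r₀ r
      rw [hderiv] at this
      linarith
  intro r hr
  have := hslope r hr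
  linarith

/-- **Reduction of the variational formula to the closed formula (1.3)**
(end of Section 2). Let `p : ℝ → ℝ` be convex, differentiable, nondecreasing on `[0,∞)`,
with `p(r) ≤ C(1 + r^{4/3})` for `r ≥ 0`. Define, in the extended reals,
`I(x) = sup_{r ≥ 0} {2rx − p(r)} + p(0)`. Then
`sup_{x ≥ 0} {x² − I(x)} + p(0) = sup_{r ≥ 0} {−r² + p(r)}`, the right-hand supremum
being finite and attained at some `r₀ ≥ 0`. -/
theorem pressure_reduction (p : ℝ → ℝ) (hconv : ConvexOn ℝ Set.univ p)
    (hdiff : Differentiable ℝ p) (hmono : MonotoneOn p (Set.Ici (0 : ℝ)))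
    (C : ℝ) (hC : 0 < C) (hgrowth : ∀ r : ℝ, 0 ≤ r → p r ≤ C * (1 + r ^ ((4 : ℝ) / 3)))
    (I : ℝ → EReal)
    (hI : ∀ x : ℝ, I x =
      (⨆ r ∈ Set.Ici (0 : ℝ), ((2 * r * x - p r : ℝ) : EReal)) + ((p 0 : ℝ) : EReal)) :
    ∃ r₀ : ℝ, 0 ≤ r₀ ∧ (∀ r : ℝ, 0 ≤ r → -r ^ 2 + p r ≤ -r₀ ^ 2 + p r₀) ∧
      (⨆ x ∈ Set.Ici (0 : ℝ), (((x ^ 2 : ℝ) : EReal) - I x)) + ((p 0 : ℝ) : EReal)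
        = ((-r₀ ^ 2 + p r₀ : ℝ) : EReal) := by
  obtain ⟨r₀, hr₀, hmax, hkey⟩ := exists_max p hconv hdiff hmono C hC hgrowth
  refine ⟨r₀, hr₀, hmax, ?_⟩
  have hSr₀ : (⨆ r ∈ Set.Ici (0:ℝ), ((2 * r * r₀ - p r : ℝ) : EReal))
      = ((2 * r₀ * r₀ - p r₀ : ℝ) : EReal) := by
    apply le_antisymm
    · refine iSup₂_le fun r hr => ?_
      exact_mod_cast hkey r hr
    · exact le_iSup₂ (f := fun r (_ : r ∈ Set.Ici (0:ℝ)) => ((2 * r * r₀ - p r : ℝ) : EReal))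
        r₀ (mem_Ici.mpr hr₀)
  have hIr₀ : I r₀ = ((2 * r₀ * r₀ - p r₀ + p 0 : ℝ) : EReal) := by
    rw [hI r₀, hSr₀, ← EReal.coe_add]
  have hsup : (⨆ x ∈ Set.Ici (0:ℝ), (((x ^ 2 : ℝ) : EReal) - I x))
      = ((-r₀ ^ 2 + p r₀ - p 0 : ℝ) : EReal) := by
    apply le_antisymm
    · refine iSup₂_le fun x hx => ?_
      have hIx : ((2 * x * x - p x + p 0 : ℝ) : EReal) ≤ I x := by
        rw [hI x, show ((2 * x * x - p x + p 0 : ℝ) : EReal)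
            = ((2 * x * x - p x : ℝ) : EReal) + ((p 0 : ℝ) : EReal) from by
          rw [← EReal.coe_add]]
        exact add_le_add_left
          (le_iSup₂ (f := fun r (_ : r ∈ Set.Ici (0:ℝ)) => ((2 * r * x - p r : ℝ) : EReal))
            x hx) _
      calc ((x ^ 2 : ℝ) : EReal) - I x
          ≤ ((x ^ 2 : ℝ) : EReal) - ((2 * x * x - p x + p 0 : ℝ) : EReal) :=
            EReal.sub_le_sub le_rfl hIx
        _ = ((x ^ 2 - (2 * x * x - p x + p 0) : ℝ) : EReal) := by rw [← EReal.coe_sub]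
        _ ≤ ((-r₀ ^ 2 + p r₀ - p 0 : ℝ) : EReal) := by
            have := hmax x hx
            exact_mod_cast (by nlinarith : x ^ 2 - (2 * x * x - p x + p 0)
              ≤ -r₀ ^ 2 + p r₀ - p 0)
    · have heq : ((-r₀ ^ 2 + p r₀ - p 0 : ℝ) : EReal) = ((r₀ ^ 2 : ℝ) : EReal) - I r₀ := by
        rw [hIr₀, ← EReal.coe_sub]
        norm_cast
        ring
      rw [heq]
      exact le_iSup₂ (f := fun x (_ : x ∈ Set.Ici (0:ℝ)) => (((x ^ 2 : ℝ) : EReal) - I x))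
        r₀ (mem_Ici.mpr hr₀)
  rw [hsup, ← EReal.coe_add]
  norm_cast
  ring
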